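/- arXiv:1311.3804 — 3 statements merged into one kernel-verified Lean document; each statement's English description precedes it below -/
import Mathlib

section
/- Let G be a finite connected simple graph and x a vertex of G. Then the x-geodomination number of G equals the cardinality of the boundary of x: g_x(G) = |∂(x)|. -/
open SimpleGraph

/-- The boundary of a vertex `x`: vertices `v` all of whose neighbors are
no further from `x` than `v` itself. -/
def boundary {V : Type*} (G : SimpleGraph V) (x : V) : Set V :=
  {v | ∀ w, G.Adj v w → G.dist x w ≤ G.dist x v}

/-- `S` is an `x`-geodominating set: every vertex lies on an `x`–`y` geodesic
for some `y ∈ S`. -/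
def IsGeodominatingSet {V : Type*} (G : SimpleGraph V) (x : V) (S : Set V) : Prop :=
  ∀ u : V, ∃ y ∈ S, G.dist x u + G.dist u y = G.dist x y

/-- The `x`-geodomination number: the minimum cardinality of an `x`-geodominating set. -/
noncomputable def geodominationNumber {V : Type*} (G : SimpleGraph V) (x : V) : ℕ :=
  sInf {n : ℕ | ∃ S : Set V, IsGeodominatingSet G x S ∧ S.ncard = n}

lemma boundary_geodominates {V : Type*} [Fintype V] (G : SimpleGraph V)
    (hG : G.Connected) (x : V) : IsGeodominatingSet G x (boundary G x) := by
  intro u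
  -- choose y maximizing dist x y among those with d x u + d u y = d x y
  obtain ⟨y, hy, hmax⟩ := Set.Finite.exists_maximalFor (fun v => G.dist x v)
    {v | G.dist x u + G.dist u v = G.dist x v} (Set.toFinite _)
    ⟨u, by simp⟩
  simp only [Set.mem_setOf_eq] at hy
  refine ⟨y, ?_, hy⟩
  intro w hadj
  by_contra hlt
  push_neg at hlt
  have hw1 : G.dist x w ≤ G.dist x y + 1 := by
    calc G.dist x w ≤ G.dist x y + G.dist y w := hG.dist_triangle
    _ = G.dist x y + 1 := by rw [dist_eq_one_iff_adj.2 hadj]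
  have huw : G.dist u w ≤ G.dist u y + 1 := by
    calc G.dist u w ≤ G.dist u y + G.dist y w := hG.dist_triangle
    _ = G.dist u y + 1 := by rw [dist_eq_one_iff_adj.2 hadj]
  have hxw : G.dist x w = G.dist x y + 1 := le_antisymm hw1 hlt
  have hw : G.dist x u + G.dist u w = G.dist x w := by
    have h1 : G.dist x w ≤ G.dist x u + G.dist u w := hG.dist_triangle
    have h2 : G.dist x u + G.dist u w ≤ G.dist x u + (G.dist u y + 1) := by omega
    omega
  have : G.dist x w ≤ G.dist x y := hmax hw (by show G.dist x y ≤ G.dist x w; omega)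
  omega

lemma boundary_subset {V : Type*} [Fintype V] (G : SimpleGraph V)
    (hG : G.Connected) (x : V) {S : Set V} (hS : IsGeodominatingSet G x S) :
    boundary G x ⊆ S := by
  intro v hv
  obtain ⟨y, hyS, hy⟩ := hS v
  by_cases hvy : v = y
  · rwa [hvy] at *
  · exfalso
    have hvy' : 0 < G.dist v y := (hG.pos_dist_of_ne hvy)
    -- take a geodesic from v to y; its first step w is a neighbor of v with
    -- dist x w = dist x v + 1
    obtain ⟨p, hp⟩ := (hG v y).exists_walk_length_eq_dist
    cases p with
    | nil => simp at hp; omega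
    | cons hadj q =>
      rename_i w
      have hq : q.length = G.dist v y - 1 := by
        simp [SimpleGraph.Walk.length_cons] at hp; omega
      have hwy : G.dist w y ≤ G.dist v y - 1 := by
        rw [← hq]; exact SimpleGraph.dist_le q
      have hxw : G.dist x v + 1 ≤ G.dist x w := by
        have h1 : G.dist x y ≤ G.dist x w + G.dist w y := hG.dist_triangle
        omega
      have := hv w hadj
      omega

theorem geodominationNumber_eq_ncard_boundary {V : Type*} [Fintype V] (G : SimpleGraph V)
    (hG : G.Connected) (x : V) :
    geodominationNumber G x = (boundary G x).ncard := by
  apply le_antisymm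
  · exact Nat.sInf_le ⟨boundary G x, boundary_geodominates G hG x, rfl⟩
  · have hmem : (boundary G x).ncard ∈
        {n : ℕ | ∃ S : Set V, IsGeodominatingSet G x S ∧ S.ncard = n} :=
      ⟨boundary G x, boundary_geodominates G hG x, rfl⟩
    apply le_csInf ⟨_, hmem⟩
    rintro n ⟨S, hS, rfl⟩
    exact Set.ncard_le_ncard (boundary_subset G hG x hS) (Set.toFinite S)
end

section
/- Let G and H be finite connected simple graphs, g ∈ V(G) and h ∈ V(H). Then ∂_{G ⊠ H}((g,h)) ⊆ (∂_G(g) × V(H)) ∪ (V(G) × ∂_H(h)), where G ⊠ H denotes the strong product of G and H. -/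
open SimpleGraph

/-- The strong product of simple graphs. -/
def strongProd {V W : Type*} (G : SimpleGraph V) (H : SimpleGraph W) : SimpleGraph (V × W) where
  Adj p q := (G.Adj p.1 q.1 ∧ p.2 = q.2) ∨ (p.1 = q.1 ∧ H.Adj p.2 q.2) ∨
    (G.Adj p.1 q.1 ∧ H.Adj p.2 q.2)
  symm := by
    constructor
    rintro ⟨a, b⟩ ⟨c, d⟩ (⟨h, rfl⟩ | ⟨rfl, h⟩ | ⟨h1, h2⟩)
    · exact Or.inl ⟨h.symm, rfl⟩
    · exact Or.inr (Or.inl ⟨rfl, h.symm⟩)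
    · exact Or.inr (Or.inr ⟨h1.symm, h2.symm⟩)
  loopless := by
    constructor
    rintro ⟨a, b⟩ (⟨h, -⟩ | ⟨-, h⟩ | ⟨h, -⟩) <;> exact h.ne rfl

lemma walk_of_two {V W : Type*} (G : SimpleGraph V) (H : SimpleGraph W) :
    ∀ {g a : V} (p : G.Walk g a) {h b : W} (q : H.Walk h b),
      ∃ r : (strongProd G H).Walk (g, h) (a, b), r.length ≤ max p.length q.length := by
  intro g a p
  induction p with
  | nil =>
    intro h b q
    induction q with
    | nil => exact ⟨Walk.nil, by simp⟩
    | cons hadj q ih =>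
      obtain ⟨r, hr⟩ := ih
      refine ⟨Walk.cons ?_ r, ?_⟩
      · exact Or.inr (Or.inl ⟨rfl, hadj⟩)
      · simp only [Walk.length_cons, Walk.length_nil] at *
        show r.length + 1 ≤ _
        omega
  | cons hadj p ih =>
    intro h b q
    cases q with
    | nil =>
      obtain ⟨r, hr⟩ := ih (Walk.nil : H.Walk h h)
      refine ⟨Walk.cons ?_ r, ?_⟩
      · exact Or.inl ⟨hadj, rfl⟩
      · simp only [Walk.length_cons, Walk.length_nil] at *
        show r.length + 1 ≤ _
        omega
    | cons hadj' q' =>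
      obtain ⟨r, hr⟩ := ih q'
      refine ⟨Walk.cons ?_ r, ?_⟩
      · exact Or.inr (Or.inr ⟨hadj, hadj'⟩)
      · simp only [Walk.length_cons] at *
        show r.length + 1 ≤ _
        omega

lemma fst_dist_le {V W : Type*} {G : SimpleGraph V} {H : SimpleGraph W} (hG : G.Connected) :
    ∀ {x y : V × W} (r : (strongProd G H).Walk x y), G.dist x.1 y.1 ≤ r.length := by
  intro x y r
  induction r with
  | nil => simp
  | @cons x z y e r ih =>
    rcases e with ⟨ha, -⟩ | ⟨heq, -⟩ | ⟨ha, -⟩ <;>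
      show _ ≤ r.length + 1
    · calc G.dist x.1 y.1 ≤ G.dist x.1 z.1 + G.dist z.1 y.1 := hG.dist_triangle
        _ ≤ 1 + r.length := by
            have := SimpleGraph.dist_le (Walk.cons ha (Walk.nil : G.Walk z.1 z.1))
            simp only [Walk.length_cons, Walk.length_nil] at this
            omega
        _ = r.length + 1 := by omega
    · rw [heq]; exact ih.trans (by omega)
    · calc G.dist x.1 y.1 ≤ G.dist x.1 z.1 + G.dist z.1 y.1 := hG.dist_triangle
        _ ≤ 1 + r.length := by
            have := SimpleGraph.dist_le (Walk.cons ha (Walk.nil : G.Walk z.1 z.1))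
            simp only [Walk.length_cons, Walk.length_nil] at this
            omega
        _ = r.length + 1 := by omega

lemma snd_dist_le {V W : Type*} {G : SimpleGraph V} {H : SimpleGraph W} (hH : H.Connected) :
    ∀ {x y : V × W} (r : (strongProd G H).Walk x y), H.dist x.2 y.2 ≤ r.length := by
  intro x y r
  induction r with
  | nil => simp
  | @cons x z y e r ih =>
    have key : x.2 = z.2 ∨ H.Adj x.2 z.2 := by
      rcases e with ⟨-, h⟩ | ⟨-, h⟩ | ⟨-, h⟩
      exacts [Or.inl h, Or.inr h, Or.inr h]
    simp only [Walk.length_cons]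
    rcases key with heq | ha
    · rw [heq]; exact ih.trans (by omega)
    · calc H.dist x.2 y.2 ≤ H.dist x.2 z.2 + H.dist z.2 y.2 := hH.dist_triangle
        _ ≤ 1 + r.length := by
            have := SimpleGraph.dist_le (Walk.cons ha (Walk.nil : H.Walk z.2 z.2))
            simp only [Walk.length_cons, Walk.length_nil] at this
            omega
        _ = r.length + 1 := by omega

lemma dist_strongProd {V W : Type*} {G : SimpleGraph V} {H : SimpleGraph W}
    (hG : G.Connected) (hH : H.Connected) (g a : V) (h b : W) :
    (strongProd G H).dist (g, h) (a, b) = max (G.dist g a) (H.dist h b) := by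
  obtain ⟨p, hp⟩ := hG.exists_walk_length_eq_dist g a
  obtain ⟨q, hq⟩ := hH.exists_walk_length_eq_dist h b
  obtain ⟨r, hr⟩ := walk_of_two G H p q
  refine le_antisymm ((SimpleGraph.dist_le r).trans (by rw [hp, hq] at hr; exact hr)) ?_
  obtain ⟨s, hs⟩ := (Walk.reachable r).exists_walk_length_eq_dist
  exact max_le (hs ▸ fst_dist_le hG s) (hs ▸ snd_dist_le hH s)

theorem boundary_strongProd_subset {V W : Type*} [Fintype V] [Fintype W]
    (G : SimpleGraph V) (H : SimpleGraph W) (hG : G.Connected) (hH : H.Connected)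
    (g : V) (h : W) :
    boundary (strongProd G H) (g, h) ⊆
      (boundary G g ×ˢ (Set.univ : Set W)) ∪ ((Set.univ : Set V) ×ˢ boundary H h) := by
  rintro ⟨a, b⟩ hmem
  by_cases hab : a ∈ boundary G g
  · exact Or.inl ⟨hab, trivial⟩
  · refine Or.inr ⟨trivial, ?_⟩
    simp only [boundary, Set.mem_setOf_eq, not_forall] at hab
    obtain ⟨a', ha', hlt⟩ := hab
    push_neg at hlt
    intro b' hb'
    have h1 := hmem (a', b) (Or.inl ⟨ha', rfl⟩)
    have h2 := hmem (a', b') (Or.inr (Or.inr ⟨ha', hb'⟩))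
    rw [dist_strongProd hG hH, dist_strongProd hG hH] at h1 h2
    dsimp only at h1 h2 ⊢
    simp only [max_le_iff, le_max_iff] at h1 h2
    omega
end

section
/- Let G and H be finite connected simple graphs, x ∈ V(G) and y ∈ V(H). Then g_x(G)·g_y(H) ≤ g_{(x,y)}(G ⊠ H) ≤ g_x(G)·|V(H)| + |V(G)|·g_y(H), where G ⊠ H denotes the strong product of G and H. -/
open SimpleGraph

section Aux
variable {V : Type*} {G : SimpleGraph V}

/-- The set of vertices forced to lie in every `x`-geodominating set: those `u`
whose only "witness" is `u` itself. -/
def forcedSet (G : SimpleGraph V) (x : V) : Set V :=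
  {u | ∀ s, G.dist x u + G.dist u s = G.dist x s → s = u}

lemma onGeo_trans (hG : G.Connected) {x u s r : V}
    (h1 : G.dist x u + G.dist u s = G.dist x s)
    (h2 : G.dist x s + G.dist s r = G.dist x r) :
    G.dist x u + G.dist u r = G.dist x r := by
  have t1 : G.dist x r ≤ G.dist x u + G.dist u r := hG.dist_triangle
  have t2 : G.dist u r ≤ G.dist u s + G.dist s r := hG.dist_triangle
  omega

lemma forcedSet_subset {x : V} {S : Set V} (h : IsGeodominatingSet G x S) :
    forcedSet G x ⊆ S := by
  intro u hu
  obtain ⟨s, hs, he⟩ := h u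
  exact (hu s he) ▸ hs

lemma isGeodominating_forcedSet [Fintype V] (hG : G.Connected) (x : V) :
    IsGeodominatingSet G x (forcedSet G x) := by
  classical
  have hb : ∀ w, G.dist x w ≤ Finset.univ.sup (fun w => G.dist x w) :=
    fun w => Finset.le_sup (Finset.mem_univ w)
  set N := Finset.univ.sup (fun w => G.dist x w) with hN
  have key : ∀ n (u : V), N - G.dist x u ≤ n →
      ∃ s ∈ forcedSet G x, G.dist x u + G.dist u s = G.dist x s := by
    intro n
    induction n with
    | zero =>
      intro u hu
      refine ⟨u, ?_, by simp [SimpleGraph.dist_self]⟩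
      intro s hs
      by_contra hne
      have hpos : 0 < G.dist u s := hG.pos_dist_of_ne (Ne.symm hne)
      have h1 := hb s
      have h2 := hb u
      omega
    | succ n ih =>
      intro u hu
      by_cases hmem : u ∈ forcedSet G x
      · exact ⟨u, hmem, by simp [SimpleGraph.dist_self]⟩
      · simp only [forcedSet, Set.mem_setOf_eq, not_forall] at hmem
        obtain ⟨s, hs, hne⟩ := hmem
        have hpos : 0 < G.dist u s := hG.pos_dist_of_ne (Ne.symm hne)
        obtain ⟨r, hr, he⟩ := ih s (by have := hb s; omega)
        exact ⟨r, hr, onGeo_trans hG hs he⟩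
  intro u
  exact key (N - G.dist x u) u le_rfl

lemma geodominationNumber_eq_ncard_forcedSet [Fintype V] (hG : G.Connected) (x : V) :
    geodominationNumber G x = (forcedSet G x).ncard := by
  apply le_antisymm
  · exact Nat.sInf_le ⟨forcedSet G x, isGeodominating_forcedSet hG x, rfl⟩
  · have hne : {n : ℕ | ∃ S : Set V, IsGeodominatingSet G x S ∧ S.ncard = n}.Nonempty :=
      ⟨_, forcedSet G x, isGeodominating_forcedSet hG x, rfl⟩
    obtain ⟨S, hS, hcard⟩ := Nat.sInf_mem hne
    rw [geodominationNumber, ← hcard]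
    exact Set.ncard_le_ncard (forcedSet_subset hS) S.toFinite

end Aux

section Prod
variable {V W : Type*} {G : SimpleGraph V} {H : SimpleGraph W}

lemma strongProd_walk_nil (a : V) :
    ∀ {b d : W} (q : H.Walk b d),
      ∃ w : (strongProd G H).Walk (a, b) (a, d), w.length = q.length := by
  intro b d q
  induction q with
  | nil => exact ⟨Walk.nil, by simp⟩
  | @cons b b2 d h' q' ih =>
    obtain ⟨w, hw⟩ := ih
    have hadj : (strongProd G H).Adj (a, b) (a, b2) := Or.inr (Or.inl ⟨rfl, h'⟩)
    exact ⟨Walk.cons hadj w, by simp [hw]⟩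

lemma strongProd_walk_aux :
    ∀ {a c : V} (p : G.Walk a c) {b d : W} (q : H.Walk b d),
      ∃ w : (strongProd G H).Walk (a, b) (c, d), w.length = max p.length q.length := by
  intro a c p
  induction p with
  | nil =>
    intro b d q
    obtain ⟨w, hw⟩ := strongProd_walk_nil (G := G) _ q
    exact ⟨w, by simp [hw]⟩
  | @cons a a2 c h p' ih =>
    intro b d q
    cases q with
    | nil =>
      obtain ⟨w, hw⟩ := ih (Walk.nil (u := b))
      have hadj : (strongProd G H).Adj (a, b) (a2, b) := Or.inl ⟨h, rfl⟩
      refine ⟨Walk.cons hadj w, ?_⟩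
      simp only [Walk.length_cons, Walk.length_nil, hw]
      omega
    | @cons b b2 d h' q' =>
      obtain ⟨w, hw⟩ := ih q'
      have hadj : (strongProd G H).Adj (a, b) (a2, b2) := Or.inr (Or.inr ⟨h, h'⟩)
      refine ⟨Walk.cons hadj w, ?_⟩
      simp only [Walk.length_cons, hw]
      omega

lemma dist_le_one_of_adj {u v : V} (h : G.Adj u v) : G.dist u v ≤ 1 := by
  simpa using SimpleGraph.dist_le h.toWalk

lemma strongProd_walk_proj (hG : G.Connected) (hH : H.Connected) :
    ∀ {p q : V × W} (w : (strongProd G H).Walk p q),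
      G.dist p.1 q.1 ≤ w.length ∧ H.dist p.2 q.2 ≤ w.length := by
  intro p q w
  induction w with
  | nil => simp [SimpleGraph.dist_self]
  | @cons p r q h w ih =>
    obtain ⟨ih1, ih2⟩ := ih
    have h1 : G.dist p.1 r.1 ≤ 1 := by
      rcases h with ⟨hA, hE⟩ | ⟨hE, hA⟩ | ⟨hA, hA'⟩
      · exact dist_le_one_of_adj hA
      · rw [hE]; simp [SimpleGraph.dist_self]
      · exact dist_le_one_of_adj hA
    have h2 : H.dist p.2 r.2 ≤ 1 := by
      rcases h with ⟨hA, hE⟩ | ⟨hE, hA⟩ | ⟨hA, hA'⟩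
      · rw [hE]; simp [SimpleGraph.dist_self]
      · exact dist_le_one_of_adj hA
      · exact dist_le_one_of_adj hA'
    have t1 : G.dist p.1 q.1 ≤ G.dist p.1 r.1 + G.dist r.1 q.1 := hG.dist_triangle
    have t2 : H.dist p.2 q.2 ≤ H.dist p.2 r.2 + H.dist r.2 q.2 := hH.dist_triangle
    simp only [Walk.length_cons]
    omega

lemma strongProd_connected (hG : G.Connected) (hH : H.Connected) :
    (strongProd G H).Connected := by
  rw [connected_iff]
  constructor
  · rintro ⟨a, b⟩ ⟨c, d⟩
    obtain ⟨p⟩ := hG.preconnected a c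
    obtain ⟨q⟩ := hH.preconnected b d
    obtain ⟨w, -⟩ := strongProd_walk_aux p q
    exact ⟨w⟩
  · obtain ⟨a⟩ := hG.nonempty
    obtain ⟨b⟩ := hH.nonempty
    exact ⟨(a, b)⟩

lemma strongProd_dist (hG : G.Connected) (hH : H.Connected) (a c : V) (b d : W) :
    (strongProd G H).dist (a, b) (c, d) = max (G.dist a c) (H.dist b d) := by
  apply le_antisymm
  · obtain ⟨p, hp⟩ := hG.exists_walk_length_eq_dist a c
    obtain ⟨q, hq⟩ := hH.exists_walk_length_eq_dist b d
    obtain ⟨w, hw⟩ := strongProd_walk_aux p q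
    have := SimpleGraph.dist_le w
    omega
  · obtain ⟨w, hw⟩ :=
      (strongProd_connected hG hH).exists_walk_length_eq_dist (a, b) (c, d)
    have := strongProd_walk_proj hG hH w
    simp only at this
    omega

lemma forcedSet_prod_subset (hG : G.Connected) (hH : H.Connected) (x : V) (y : W) :
    forcedSet G x ×ˢ forcedSet H y ⊆ forcedSet (strongProd G H) (x, y) := by
  rintro ⟨u, v⟩ ⟨hu, hv⟩ ⟨s, t⟩ hst
  replace hu : u ∈ forcedSet G x := hu
  replace hv : v ∈ forcedSet H y := hv
  rw [strongProd_dist hG hH, strongProd_dist hG hH, strongProd_dist hG hH] at hst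
  have tG : G.dist x s ≤ G.dist x u + G.dist u s := hG.dist_triangle
  have tH : H.dist y t ≤ H.dist y v + H.dist v t := hH.dist_triangle
  have hor : G.dist x s = G.dist x u + G.dist u s ∨
      H.dist y t = H.dist y v + H.dist v t := by omega
  rcases hor with h1 | h2
  · have hsu : s = u := hu s h1.symm
    subst hsu
    have h0 : G.dist s s = 0 := SimpleGraph.dist_self
    have hor2 : H.dist v t = 0 ∨ H.dist y t = H.dist y v + H.dist v t := by
      rw [h0] at hst h1
      omega
    rcases hor2 with h3 | h4
    · have : v = t := (hH.dist_eq_zero_iff).mp h3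
      subst this; rfl
    · have : t = v := hv t h4.symm
      subst this; rfl
  · have htv : t = v := hv t h2.symm
    subst htv
    have h0 : H.dist t t = 0 := SimpleGraph.dist_self
    have hor2 : G.dist u s = 0 ∨ G.dist x s = G.dist x u + G.dist u s := by
      rw [h0] at hst h2
      omega
    rcases hor2 with h3 | h4
    · have : u = s := (hG.dist_eq_zero_iff).mp h3
      subst this; rfl
    · have : s = u := hu s h4.symm
      subst this; rfl

lemma forcedSet_strongProd_subset (hG : G.Connected) (hH : H.Connected) (x : V) (y : W) :
    forcedSet (strongProd G H) (x, y) ⊆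
      (forcedSet G x ×ˢ (Set.univ : Set W)) ∪ ((Set.univ : Set V) ×ˢ forcedSet H y) := by
  rintro ⟨u, v⟩ huv
  rcases le_total (H.dist y v) (G.dist x u) with hle | hle
  · refine Or.inl ⟨?_, trivial⟩
    show u ∈ forcedSet G x
    intro s hs
    have h0 : H.dist v v = 0 := SimpleGraph.dist_self
    have h : (s, v) = (u, v) := by
      apply huv (s, v)
      rw [strongProd_dist hG hH, strongProd_dist hG hH, strongProd_dist hG hH]
      omega
    exact (Prod.ext_iff.mp h).1
  · refine Or.inr ⟨trivial, ?_⟩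
    show v ∈ forcedSet H y
    intro t ht
    have h0 : G.dist u u = 0 := SimpleGraph.dist_self
    have h : (u, t) = (u, v) := by
      apply huv (u, t)
      rw [strongProd_dist hG hH, strongProd_dist hG hH, strongProd_dist hG hH]
      omega
    exact (Prod.ext_iff.mp h).2

lemma ncard_prod' (s : Set V) (t : Set W) : (s ×ˢ t).ncard = s.ncard * t.ncard := by
  rw [← Nat.card_coe_set_eq, ← Nat.card_coe_set_eq, ← Nat.card_coe_set_eq,
    Nat.card_congr (Equiv.Set.prod s t), Nat.card_prod]

end Prod

theorem geodominationNumber_strongProd_bounds {V W : Type*} [Fintype V] [Fintype W]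
    (G : SimpleGraph V) (H : SimpleGraph W) (hG : G.Connected) (hH : H.Connected)
    (x : V) (y : W) :
    geodominationNumber G x * geodominationNumber H y ≤
        geodominationNumber (strongProd G H) (x, y) ∧
      geodominationNumber (strongProd G H) (x, y) ≤
        geodominationNumber G x * Fintype.card W + Fintype.card V * geodominationNumber H y := by
  have hP := strongProd_connected hG hH
  rw [geodominationNumber_eq_ncard_forcedSet hG x,
    geodominationNumber_eq_ncard_forcedSet hH y,
    geodominationNumber_eq_ncard_forcedSet hP (x, y)]
  constructor
  · calc (forcedSet G x).ncard * (forcedSet H y).ncard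
        = (forcedSet G x ×ˢ forcedSet H y).ncard := (ncard_prod' _ _).symm
      _ ≤ (forcedSet (strongProd G H) (x, y)).ncard :=
          Set.ncard_le_ncard (forcedSet_prod_subset hG hH x y) (Set.toFinite _)
  · calc (forcedSet (strongProd G H) (x, y)).ncard
        ≤ ((forcedSet G x ×ˢ (Set.univ : Set W)) ∪
            ((Set.univ : Set V) ×ˢ forcedSet H y)).ncard :=
          Set.ncard_le_ncard (forcedSet_strongProd_subset hG hH x y) (Set.toFinite _)
      _ ≤ (forcedSet G x ×ˢ (Set.univ : Set W)).ncard +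
            (((Set.univ : Set V)) ×ˢ forcedSet H y).ncard := Set.ncard_union_le _ _
      _ = (forcedSet G x).ncard * Fintype.card W +
            Fintype.card V * (forcedSet H y).ncard := by
          rw [ncard_prod', ncard_prod', Set.ncard_univ, Set.ncard_univ,
            Nat.card_eq_fintype_card, Nat.card_eq_fintype_card]
end
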